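/- Let L, L' ≥ 2 be integers with input alphabet 𝒳 = {1,…,L} and output alphabet 𝒴 = {1,…,L'}, and let W(y|x) > 0 for all x ∈ 𝒳, y ∈ 𝒴 with Σ_{y∈𝒴} W(y|x) = 1 for every x. Then the normalized mutual information Ĩ(f) = I(f)/E(f) is a quasiconcave function of f on the standard probability simplex over 𝒳. -/
import Mathlib


/-- The mutual information `I(f) = Σ_y Σ_x f(x)·W(y|x)·log₂(W(y|x)/Σ_j f(j)·W(y|j))`
of an input distribution `f` on `𝒳 = {1,…,L}` (indexed by `Fin L`, symbol `x` having
runlength value `x+1`) through a channel with transition probabilities `W`. -/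
noncomputable def mutualInfo (L L' : ℕ) (W : Fin L → Fin L' → ℝ) (f : Fin L → ℝ) : ℝ :=
  ∑ y, ∑ x, f x * W x y * Real.logb 2 (W x y / ∑ j, f j * W j y)

/-- The mean runlength `E(f) = Σ_{j∈{1,…,L}} j·f(j)` (symbol `j : Fin L` has value `j+1`). -/
noncomputable def meanRL (L : ℕ) (f : Fin L → ℝ) : ℝ :=
  ∑ j : Fin L, (((j : ℕ) : ℝ) + 1) * f j

section aux

variable {L L' : ℕ} {W : Fin L → Fin L' → ℝ}

lemma q_pos (hWpos : ∀ x y, 0 < W x y) {f : Fin L → ℝ}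
    (hf : f ∈ stdSimplex ℝ (Fin L)) (y : Fin L') : 0 < ∑ j, f j * W j y := by
  obtain ⟨hnn, hsum⟩ := hf
  have hex : ∃ j : Fin L, 0 < f j := by
    by_contra h
    push_neg at h
    have : (∑ j, f j) ≤ 0 := Finset.sum_nonpos fun j _ => h j
    simp [hsum] at this
    linarith
  obtain ⟨j, hj⟩ := hex
  have : 0 < f j * W j y := mul_pos hj (hWpos j y)
  refine Finset.sum_pos' (fun i _ => mul_nonneg (hnn i) (hWpos i y).le) ⟨j, Finset.mem_univ j, this⟩

lemma mutualInfo_eq (hWpos : ∀ x y, 0 < W x y) {f : Fin L → ℝ}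
    (hf : f ∈ stdSimplex ℝ (Fin L)) :
    mutualInfo L L' W f = (∑ y, ∑ x, f x * W x y * Real.logb 2 (W x y))
      + ∑ y, Real.negMulLog (∑ j, f j * W j y) / Real.log 2 := by
  unfold mutualInfo
  rw [← Finset.sum_add_distrib]
  refine Finset.sum_congr rfl fun y _ => ?_
  have hq := q_pos hWpos hf y
  have key : ∀ x, f x * W x y * Real.logb 2 (W x y / ∑ j, f j * W j y)
      = f x * W x y * Real.logb 2 (W x y) - f x * W x y * Real.logb 2 (∑ j, f j * W j y) := by
    intro x
    rw [Real.logb_div (hWpos x y).ne' hq.ne']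
    ring
  simp only [key, Finset.sum_sub_distrib]
  have : ∑ x, f x * W x y * Real.logb 2 (∑ j, f j * W j y)
      = (∑ x, f x * W x y) * Real.logb 2 (∑ j, f j * W j y) := by
    rw [Finset.sum_mul]
  rw [this]
  have hlog2 : Real.log 2 ≠ 0 := by
    have : (1:ℝ) < 2 := one_lt_two
    exact (Real.log_pos this).ne'
  rw [Real.negMulLog, Real.logb]
  field_simp
  ring

lemma mutualInfo_superadd (hWpos : ∀ x y, 0 < W x y) {f g : Fin L → ℝ}
    (hf : f ∈ stdSimplex ℝ (Fin L)) (hg : g ∈ stdSimplex ℝ (Fin L))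
    {a b : ℝ} (ha : 0 ≤ a) (hb : 0 ≤ b) (hab : a + b = 1) :
    a * mutualInfo L L' W f + b * mutualInfo L L' W g
      ≤ mutualInfo L L' W (a • f + b • g) := by
  have hmem : a • f + b • g ∈ stdSimplex ℝ (Fin L) :=
    (convex_stdSimplex ℝ (Fin L)) hf hg ha hb hab
  rw [mutualInfo_eq hWpos hf, mutualInfo_eq hWpos hg, mutualInfo_eq hWpos hmem]
  have hlin : ∑ y, ∑ x, (a • f + b • g) x * W x y * Real.logb 2 (W x y)
      = a * (∑ y, ∑ x, f x * W x y * Real.logb 2 (W x y))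
        + b * (∑ y, ∑ x, g x * W x y * Real.logb 2 (W x y)) := by
    simp only [Finset.mul_sum, ← Finset.sum_add_distrib, Pi.add_apply, Pi.smul_apply,
      smul_eq_mul]
    refine Finset.sum_congr rfl fun y _ => Finset.sum_congr rfl fun x _ => ?_
    ring
  rw [hlin]
  have hconc : a * (∑ y, Real.negMulLog (∑ j, f j * W j y) / Real.log 2)
      + b * (∑ y, Real.negMulLog (∑ j, g j * W j y) / Real.log 2)
      ≤ ∑ y, Real.negMulLog (∑ j, (a • f + b • g) j * W j y) / Real.log 2 := by
    simp only [Finset.mul_sum, ← Finset.sum_add_distrib]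
    refine Finset.sum_le_sum fun y _ => ?_
    have hqf : (0:ℝ) ≤ ∑ j, f j * W j y := (q_pos hWpos hf y).le
    have hqg : (0:ℝ) ≤ ∑ j, g j * W j y := (q_pos hWpos hg y).le
    have hcc := Real.concaveOn_negMulLog.2 hqf hqg ha hb hab
    have hqeq : ∑ j, (a • f + b • g) j * W j y
        = a • (∑ j, f j * W j y) + b • (∑ j, g j * W j y) := by
      simp only [Pi.add_apply, Pi.smul_apply, smul_eq_mul, Finset.mul_sum,
        ← Finset.sum_add_distrib]
      refine Finset.sum_congr rfl fun j _ => by ring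
    rw [hqeq]
    have hlog2pos : (0:ℝ) < Real.log 2 := Real.log_pos one_lt_two
    simp only [smul_eq_mul] at hcc ⊢
    have heq : a * (Real.negMulLog (∑ j, f j * W j y) / Real.log 2)
          + b * (Real.negMulLog (∑ j, g j * W j y) / Real.log 2)
        = (a * Real.negMulLog (∑ j, f j * W j y)
            + b * Real.negMulLog (∑ j, g j * W j y)) / Real.log 2 := by ring
    rw [heq]
    gcongr
  linarith

lemma meanRL_pos {f : Fin L → ℝ} (hf : f ∈ stdSimplex ℝ (Fin L)) : 0 < meanRL L f := by
  obtain ⟨hnn, hsum⟩ := hf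
  have h1 : (1:ℝ) = ∑ j, f j := hsum.symm
  have : (∑ j, f j) ≤ meanRL L f := by
    refine Finset.sum_le_sum fun j _ => ?_
    have hj : (0:ℝ) ≤ ((j : ℕ) : ℝ) := Nat.cast_nonneg _
    nlinarith [hnn j]
  linarith

end aux

/-- The normalized mutual information `Ĩ(f) = I(f)/E(f)` is quasiconcave on the
standard probability simplex over `𝒳 = {1,…,L}`. -/
theorem stmt5 (L L' : ℕ) (hL : 2 ≤ L) (hL' : 2 ≤ L')
    (W : Fin L → Fin L' → ℝ) (hWpos : ∀ x y, 0 < W x y) (hWsum : ∀ x, ∑ y, W x y = 1) :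
    QuasiconcaveOn ℝ (stdSimplex ℝ (Fin L)) (fun f => mutualInfo L L' W f / meanRL L f) := by
  intro c
  rintro f ⟨hfs, hfc⟩ g ⟨hgs, hgc⟩ a b ha hb hab
  have hmem : a • f + b • g ∈ stdSimplex ℝ (Fin L) :=
    (convex_stdSimplex ℝ (Fin L)) hfs hgs ha hb hab
  refine ⟨hmem, ?_⟩
  have hEf := meanRL_pos hfs
  have hEg := meanRL_pos hgs
  have hEz := meanRL_pos hmem
  simp only [Set.mem_setOf_eq] at hfc hgc ⊢
  rw [le_div_iff₀ hEz]
  rw [le_div_iff₀ hEf] at hfc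
  rw [le_div_iff₀ hEg] at hgc
  have hElin : meanRL L (a • f + b • g) = a * meanRL L f + b * meanRL L g := by
    unfold meanRL
    simp only [Pi.add_apply, Pi.smul_apply, smul_eq_mul, Finset.mul_sum,
      ← Finset.sum_add_distrib]
    refine Finset.sum_congr rfl fun j _ => by ring
  have hI := mutualInfo_superadd hWpos hfs hgs ha hb hab
  rw [hElin]
  nlinarith [mul_le_mul_of_nonneg_left hfc ha, mul_le_mul_of_nonneg_left hgc hb]
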